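/- arXiv:2203.07375 — 3 statements merged into one kernel-verified Lean document; each statement's English description precedes it below -/
import Mathlib

section
/- Let q be a probability measure on X × {1,…,n}, let h : X → Δⁿ be a measurable classifier, and define the true transferable probability ẇ = E_{(x,y)∼q} e_y ∈ ℝⁿ and its estimate w = E_{(x,y)∼q} h(x) ∈ ℝⁿ (coordinatewise expectations). Then the estimation error of the transferable probability satisfies ‖ẇ − w‖₁ ≤ 2δ̄ + 2 Pr_{(x,y)∼q}[φ(h(x)) ≠ y], where δ̄ = E_{(x,y)∼q} δ(h(x)), δ(ŷ) = 1 − maxⱼ ŷⱼ, and φ is an argmax selector. -/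
open MeasureTheory

/-- For a probability measure `q` on `X × Fin n` and a measurable classifier
`h : X → Δⁿ`, the true transferable probability `ẇ c = E_q (e_y) c` and its estimate
`w c = E_q (h x) c` satisfy `‖ẇ − w‖₁ ≤ 2 δ̄ + 2 Pr_q[φ (h x) ≠ y]`, where
`δ̄ = E_q (1 − maxⱼ (h x) j)` and `φ` is an argmax selector. -/
theorem transferable_probability_estimation_error (n : ℕ) [NeZero n]
    {X : Type*} [MeasurableSpace X]
    (q : Measure (X × Fin n)) [IsProbabilityMeasure q]
    (h : X → Fin n → ℝ) (hmeas : Measurable h)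
    (hsimplex : ∀ x, (∀ j, 0 ≤ h x j ∧ h x j ≤ 1) ∧ ∑ j, h x j = 1)
    (φ : (Fin n → ℝ) → Fin n) (hφmeas : Measurable fun x => φ (h x))
    (hφ : ∀ x, h x (φ (h x)) = ⨆ j, h x j) :
    ∑ c, |(∫ p, (if p.2 = c then (1 : ℝ) else 0) ∂q) - ∫ p, h p.1 c ∂q|
      ≤ 2 * (∫ p, (1 - ⨆ j, h p.1 j) ∂q)
        + 2 * (q {p | φ (h p.1) ≠ p.2}).toReal := by
  classical
  -- basic simplex facts
  have hsup_eq : ∀ x, (⨆ j, h x j) = h x (φ (h x)) := fun x => (hφ x).symm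
  have hbdd : ∀ x, BddAbove (Set.range (h x)) := fun x => Set.Finite.bddAbove (Set.finite_range _)
  have hle_sup : ∀ x (c : Fin n), h x c ≤ ⨆ j, h x j := fun x c => le_ciSup (hbdd x) c
  have hsup_le_one : ∀ x, (⨆ j, h x j) ≤ 1 := by
    intro x; rw [hsup_eq]; exact ((hsimplex x).1 _).2
  have hsup_nonneg : ∀ x, 0 ≤ ⨆ j, h x j := by
    intro x; rw [hsup_eq]; exact ((hsimplex x).1 _).1
  -- measurability of sup
  have hsupmeas : Measurable (fun x => ⨆ j, h x j) := by
    have : (fun x => ⨆ j, h x j) = fun x => ∑ j, if φ (h x) = j then h x j else 0 := by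
      funext x
      rw [Finset.sum_ite_eq Finset.univ (φ (h x)) (fun j => h x j)]
      simp [hφ x]
    rw [this]
    exact Finset.measurable_sum _ (fun j _ =>
      Measurable.ite (hφmeas (measurableSet_singleton j))
        ((measurable_pi_apply j).comp hmeas) measurable_const)
  set S : Set (X × Fin n) := {p | φ (h p.1) ≠ p.2} with hSdef
  have hSmeas : MeasurableSet S := by
    have : MeasurableSet {p : X × Fin n | φ (h p.1) = p.2} :=
      measurableSet_eq_fun (hφmeas.comp measurable_fst) measurable_snd
    simpa [hSdef, Set.compl_setOf] using this.compl
  -- integrability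
  have hInth : ∀ c : Fin n, Integrable (fun p : X × Fin n => h p.1 c) q := by
    intro c
    refine Integrable.mono' (integrable_const 1)
      (((measurable_pi_apply c).comp (hmeas.comp measurable_fst)).aestronglyMeasurable)
      (ae_of_all _ fun p => ?_)
    rw [Real.norm_eq_abs, abs_le]
    exact ⟨by linarith [((hsimplex p.1).1 c).1], ((hsimplex p.1).1 c).2⟩
  have hIntind : ∀ c : Fin n, Integrable (fun p : X × Fin n => if p.2 = c then (1:ℝ) else 0) q := by
    intro c
    refine Integrable.mono' (integrable_const 1)
      (Measurable.aestronglyMeasurable (Measurable.ite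
        (measurable_snd (measurableSet_singleton c)) measurable_const measurable_const))
      (ae_of_all _ fun p => ?_)
    by_cases hp : p.2 = c <;> simp [hp]
  have hIntf : ∀ c : Fin n,
      Integrable (fun p : X × Fin n => (if p.2 = c then (1:ℝ) else 0) - h p.1 c) q :=
    fun c => (hIntind c).sub (hInth c)
  have hIntsup : Integrable (fun p : X × Fin n => 1 - ⨆ j, h p.1 j) q :=
    (integrable_const 1).sub (by
      refine Integrable.mono' (integrable_const 1)
        ((hsupmeas.comp measurable_fst).aestronglyMeasurable)
        (ae_of_all _ fun p => ?_)
      rw [Real.norm_eq_abs, abs_le]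
      exact ⟨by linarith [hsup_nonneg p.1], hsup_le_one p.1⟩)
  have hIntSind : Integrable (S.indicator (fun _ => (1:ℝ))) q :=
    (integrable_const 1).indicator hSmeas
  -- pointwise bound
  have key : ∀ p : X × Fin n,
      (∑ c, |(if p.2 = c then (1:ℝ) else 0) - h p.1 c|)
        ≤ 2 * (1 - ⨆ j, h p.1 j) + 2 * S.indicator (fun _ => (1:ℝ)) p := by
    intro p
    obtain ⟨x, y⟩ := p
    have hsum : (∑ c, |(if y = c then (1:ℝ) else 0) - h x c|) = 2 * (1 - h x y) := by
      rw [← Finset.sum_erase_add Finset.univ _ (Finset.mem_univ y)]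
      have h1 : ∀ c ∈ Finset.univ.erase y, |(if y = c then (1:ℝ) else 0) - h x c| = h x c := by
        intro c hc
        have : y ≠ c := fun e => (Finset.mem_erase.mp hc).1 e.symm
        rw [if_neg this, zero_sub, abs_neg, abs_of_nonneg ((hsimplex x).1 c).1]
      rw [Finset.sum_congr rfl h1, if_pos rfl,
        abs_of_nonneg (by linarith [((hsimplex x).1 y).2])]
      have h2 : ∑ c ∈ Finset.univ.erase y, h x c = 1 - h x y := by
        have := (hsimplex x).2
        rw [← Finset.sum_erase_add Finset.univ _ (Finset.mem_univ y)] at this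
        linarith
      rw [h2]; ring
    rw [hsum]
    by_cases hc : φ (h x) = y
    · have hind : S.indicator (fun _ => (1:ℝ)) (x, y) = 0 := by
        apply Set.indicator_of_notMem
        simp [hSdef, hc]
      rw [hind]
      have : (⨆ j, h x j) = h x y := by rw [hsup_eq, hc]
      rw [this]; ring_nf; linarith
    · have hind : S.indicator (fun _ => (1:ℝ)) (x, y) = 1 := by
        apply Set.indicator_of_mem
        simp [hSdef, hc]
      rw [hind]
      have := hsup_le_one x
      have := ((hsimplex x).1 y).1
      linarith
  -- main chain
  calc ∑ c, |(∫ p, (if p.2 = c then (1 : ℝ) else 0) ∂q) - ∫ p, h p.1 c ∂q|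
      = ∑ c, |∫ p, ((if p.2 = c then (1 : ℝ) else 0) - h p.1 c) ∂q| := by
        refine Finset.sum_congr rfl fun c _ => ?_
        rw [integral_sub (hIntind c) (hInth c)]
    _ ≤ ∑ c, ∫ p, |(if p.2 = c then (1 : ℝ) else 0) - h p.1 c| ∂q :=
        Finset.sum_le_sum fun c _ => (by simpa [Real.norm_eq_abs] using norm_integral_le_integral_norm (μ := q) (fun p => (if p.2 = c then (1:ℝ) else 0) - h p.1 c))
    _ = ∫ p, ∑ c, |(if p.2 = c then (1 : ℝ) else 0) - h p.1 c| ∂q := by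
        rw [integral_finset_sum _ (fun c _ => (hIntf c).abs)]
    _ ≤ ∫ p, (2 * (1 - ⨆ j, h p.1 j) + 2 * S.indicator (fun _ => (1:ℝ)) p) ∂q := by
        refine integral_mono (integrable_finset_sum _ (fun c _ => (hIntf c).abs))
          (((hIntsup.const_mul 2)).add (hIntSind.const_mul 2)) key
    _ = 2 * (∫ p, (1 - ⨆ j, h p.1 j) ∂q) + 2 * (q S).toReal := by
        rw [integral_add (hIntsup.const_mul 2) (hIntSind.const_mul 2),
          integral_const_mul, integral_const_mul]
        congr 1
        rw [mul_eq_mul_left_iff]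
        left
        exact integral_indicator_one (μ := q) hSmeas
    _ = 2 * (∫ p, (1 - ⨆ j, h p.1 j) ∂q) + 2 * (q {p | φ (h p.1) ≠ p.2}).toReal := rfl
end

section
/- Let q be a probability measure on X × {1,…,n}, let h : X → Δⁿ be a measurable classifier, and let C ⊆ {1,…,n} be such that y ∈ C for q-almost every (x, y). With ẇ = E_{(x,y)∼q} e_y, w = E_{(x,y)∼q} h(x), δ̄ = E_{(x,y)∼q} (1 − maxⱼ h(x)ⱼ), E_I(h) = Pr_{(x,y)∼q}[φ(h(x)) ∉ C], and E_q(h_C) = Pr_{(x,y)∼q}[φ(h(x)) ∈ C and φ(h(x)) ≠ y], the estimation error of the transferable probability satisfies ‖ẇ − w‖₁ ≤ 2δ̄ + 2E_I(h) + 2E_q(h_C). -/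
open MeasureTheory

/-- Pointwise bound. -/
lemma ptwise_bound_aux (n : ℕ) (g : Fin n → ℝ)
    (hg0 : ∀ j, 0 ≤ g j) (hg1 : ∀ j, g j ≤ 1) (hgs : ∑ j, g j = 1)
    (a : Fin n) (ha : g a = ⨆ j, g j) (C : Finset (Fin n)) (y : Fin n) (hy : y ∈ C) :
    ∑ c, |(if y = c then (1 : ℝ) else 0) - g c|
      ≤ 2 * (1 - ⨆ j, g j) + 2 * (if a ∉ C then (1:ℝ) else 0)
        + 2 * (if (a ∈ C ∧ a ≠ y) then (1:ℝ) else 0) := by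
  rw [← ha]
  have hsum : ∑ c, |(if y = c then (1 : ℝ) else 0) - g c| = 2 * (1 - g y) := by
    rw [← Finset.sum_erase_add _ _ (Finset.mem_univ y)]
    have h1 : ∑ c ∈ Finset.univ.erase y, |(if y = c then (1 : ℝ) else 0) - g c|
        = ∑ c ∈ Finset.univ.erase y, g c := by
      apply Finset.sum_congr rfl
      intro c hc
      have : y ≠ c := fun hyc => (Finset.mem_erase.mp hc).1 hyc.symm
      simp [this, abs_of_nonneg (hg0 c)]
    have h2 : ∑ c ∈ Finset.univ.erase y, g c = 1 - g y := by
      have := Finset.sum_erase_add Finset.univ g (Finset.mem_univ y)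
      linarith [this.trans hgs]
    rw [h1, h2]
    have : |(if y = y then (1 : ℝ) else 0) - g y| = 1 - g y := by
      simp [abs_of_nonneg (sub_nonneg.mpr (hg1 y))]
    rw [this]; ring
  rw [hsum]
  by_cases hay : a = y
  · subst hay
    have : (if (a ∈ C ∧ a ≠ a) then (1:ℝ) else 0) = 0 := by simp
    rw [this]
    by_cases haC : a ∉ C <;> simp [haC] <;> linarith
  · have h1a : g a ≤ 1 := hg1 a
    have h0y : 0 ≤ g y := hg0 y
    by_cases haC : a ∈ C
    · have : (if a ∉ C then (1:ℝ) else 0) = 0 := by simp [haC]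
      rw [this]
      have : (if (a ∈ C ∧ a ≠ y) then (1:ℝ) else 0) = 1 := by simp [haC, hay]
      rw [this]; linarith
    · have : (if a ∉ C then (1:ℝ) else 0) = 1 := by simp [haC]
      rw [this]
      have h2 : (0:ℝ) ≤ (if (a ∈ C ∧ a ≠ y) then (1:ℝ) else 0) := by positivity
      linarith

/-- With labels almost surely in the shared class space `C`, the estimation error of
the transferable probability satisfies
`‖ẇ − w‖₁ ≤ 2 δ̄ + 2 E_I(h) + 2 E_q(h_C)`, where `ẇ = E_q e_y`, `w = E_q h(x)`,
`δ̄ = E_q (1 − maxⱼ (h x) j)`, `E_I(h) = Pr_q[φ (h x) ∉ C]` is the Type I error and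
`E_q(h_C) = Pr_q[φ (h x) ∈ C ∧ φ (h x) ≠ y]`. -/
theorem transferable_probability_error_bound_shared (n : ℕ) [NeZero n]
    {X : Type*} [MeasurableSpace X]
    (q : Measure (X × Fin n)) [IsProbabilityMeasure q]
    (h : X → Fin n → ℝ) (hmeas : Measurable h)
    (hsimplex : ∀ x, (∀ j, 0 ≤ h x j ∧ h x j ≤ 1) ∧ ∑ j, h x j = 1)
    (φ : (Fin n → ℝ) → Fin n) (hφmeas : Measurable fun x => φ (h x))
    (hφ : ∀ x, h x (φ (h x)) = ⨆ j, h x j)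
    (C : Finset (Fin n)) (hC : ∀ᵐ p ∂q, p.2 ∈ C) :
    ∑ c, |(∫ p, (if p.2 = c then (1 : ℝ) else 0) ∂q) - ∫ p, h p.1 c ∂q|
      ≤ 2 * (∫ p, (1 - ⨆ j, h p.1 j) ∂q)
        + 2 * (q {p | φ (h p.1) ∉ C}).toReal
        + 2 * (q {p | φ (h p.1) ∈ C ∧ φ (h p.1) ≠ p.2}).toReal := by
  -- basic measurability facts
  have hφp : Measurable (fun p : X × Fin n => φ (h p.1)) :=
    hφmeas.comp measurable_fst
  have hhc : ∀ c, Measurable (fun p : X × Fin n => h p.1 c) := fun c =>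
    (measurable_pi_apply c).comp (hmeas.comp measurable_fst)
  -- the sup equals h at φ
  have hsup_eq : (fun p : X × Fin n => (1 : ℝ) - ⨆ j, h p.1 j)
      = fun p => 1 - ∑ j, (if φ (h p.1) = j then (1:ℝ) else 0) * h p.1 j := by
    funext p
    rw [← hφ p.1, Finset.sum_eq_single (φ (h p.1))]
    · simp
    · intro b _ hb; simp [Ne.symm hb]
    · simp
  have hsupmeas : Measurable (fun p : X × Fin n => (1 : ℝ) - ⨆ j, h p.1 j) := by
    rw [hsup_eq]
    apply Measurable.const_sub
    apply Finset.measurable_sum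
    intro j _
    exact (Measurable.ite (hφp (MeasurableSet.singleton j)) measurable_const
      measurable_const).mul (hhc j)
  -- boundedness helper
  have key : ∀ (F : X × Fin n → ℝ), Measurable F → (∀ p, |F p| ≤ 2) → Integrable F q := by
    intro F hF hb
    exact (integrable_const (2:ℝ)).mono' hF.aestronglyMeasurable
      (Filter.Eventually.of_forall (by simpa using hb))
  have hs0 : ∀ x j, 0 ≤ h x j := fun x j => ((hsimplex x).1 j).1
  have hs1 : ∀ x j, h x j ≤ 1 := fun x j => ((hsimplex x).1 j).2
  -- integrability of the components
  have hind_int : ∀ c, Integrable (fun p : X × Fin n => (if p.2 = c then (1:ℝ) else 0)) q := by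
    intro c
    apply key _ (Measurable.ite (measurable_snd (MeasurableSet.singleton c))
      measurable_const measurable_const)
    intro p; by_cases hp : p.2 = c <;> simp [hp]
  have hh_int : ∀ c, Integrable (fun p : X × Fin n => h p.1 c) q := by
    intro c
    apply key _ (hhc c)
    intro p
    rw [abs_of_nonneg (hs0 _ _)]
    linarith [hs1 p.1 c]
  have hf_int : ∀ c, Integrable
      (fun p : X × Fin n => |(if p.2 = c then (1:ℝ) else 0) - h p.1 c|) q := by
    intro c
    exact ((hind_int c).sub (hh_int c)).abs
  -- Step 1: bound each coordinate by integral of abs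
  have step1 : ∀ c, |(∫ p, (if p.2 = c then (1 : ℝ) else 0) ∂q) - ∫ p, h p.1 c ∂q|
      ≤ ∫ p, |(if p.2 = c then (1:ℝ) else 0) - h p.1 c| ∂q := by
    intro c
    rw [← integral_sub (hind_int c) (hh_int c)]
    simpa [Real.norm_eq_abs] using
      norm_integral_le_integral_norm (fun p : X × Fin n => (if p.2 = c then (1:ℝ) else 0) - h p.1 c) (μ := q)
  -- Step 2: exchange sum and integral
  have step2 : ∑ c, (∫ p, |(if p.2 = c then (1:ℝ) else 0) - h p.1 c| ∂q)
      = ∫ p, ∑ c, |(if p.2 = c then (1:ℝ) else 0) - h p.1 c| ∂q := by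
    rw [integral_finset_sum _ (fun c _ => hf_int c)]
  -- the dominating function
  set G : X × Fin n → ℝ := fun p =>
    2 * (1 - ⨆ j, h p.1 j) + 2 * (if φ (h p.1) ∉ C then (1:ℝ) else 0)
      + 2 * (if (φ (h p.1) ∈ C ∧ φ (h p.1) ≠ p.2) then (1:ℝ) else 0) with hG
  have hS1 : MeasurableSet {p : X × Fin n | φ (h p.1) ∉ C} := by
    have : {p : X × Fin n | φ (h p.1) ∉ C} = (fun p : X × Fin n => φ (h p.1)) ⁻¹' (↑C)ᶜ := by
      ext p; simp
    rw [this]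
    exact hφp ((Set.toFinite (C : Set (Fin n))).measurableSet.compl)
  have hS2 : MeasurableSet {p : X × Fin n | φ (h p.1) ∈ C ∧ φ (h p.1) ≠ p.2} := by
    have : {p : X × Fin n | φ (h p.1) ∈ C ∧ φ (h p.1) ≠ p.2}
        = (fun p : X × Fin n => φ (h p.1)) ⁻¹' (↑C) ∩
          (fun p : X × Fin n => (φ (h p.1), p.2)) ⁻¹' {q : Fin n × Fin n | q.1 ≠ q.2} := by
      ext p; simp
    rw [this]
    refine (hφp (Set.toFinite (C : Set (Fin n))).measurableSet).inter ?_
    exact (hφp.prodMk measurable_snd) (Set.Finite.measurableSet (Set.toFinite _))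
  have hind1_int : Integrable (fun p : X × Fin n => (if φ (h p.1) ∉ C then (1:ℝ) else 0)) q := by
    apply key _ (Measurable.ite hS1 measurable_const measurable_const)
    intro p; by_cases hp : φ (h p.1) ∉ C <;> simp [hp]
  have hind2_int : Integrable
      (fun p : X × Fin n => (if (φ (h p.1) ∈ C ∧ φ (h p.1) ≠ p.2) then (1:ℝ) else 0)) q := by
    apply key _ (Measurable.ite hS2 measurable_const measurable_const)
    intro p; by_cases hp : (φ (h p.1) ∈ C ∧ φ (h p.1) ≠ p.2) <;> simp [hp]
  have hsup_int : Integrable (fun p : X × Fin n => (1 : ℝ) - ⨆ j, h p.1 j) q := by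
    apply key _ hsupmeas
    intro p
    have h1 : h p.1 (φ (h p.1)) = ⨆ j, h p.1 j := hφ p.1
    rw [← h1, abs_of_nonneg (sub_nonneg.mpr (hs1 _ _))]
    linarith [hs0 p.1 (φ (h p.1))]
  have hG_int : Integrable G q := by
    exact ((hsup_int.const_mul 2).add (hind1_int.const_mul 2)).add (hind2_int.const_mul 2)
  -- Step 3: a.e. pointwise bound
  have step3 : (∫ p, ∑ c, |(if p.2 = c then (1:ℝ) else 0) - h p.1 c| ∂q) ≤ ∫ p, G p ∂q := by
    apply integral_mono_ae
    · exact integrable_finset_sum _ (fun c _ => hf_int c)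
    · exact hG_int
    · filter_upwards [hC] with p hp
      exact ptwise_bound_aux n (h p.1) (hs0 p.1) (hs1 p.1) (hsimplex p.1).2
        (φ (h p.1)) (hφ p.1) C p.2 hp
  -- Step 4: compute ∫ G
  have hI1 : (∫ p, (if φ (h p.1) ∉ C then (1:ℝ) else 0) ∂q)
      = (q {p | φ (h p.1) ∉ C}).toReal := by
    have heq : (fun p : X × Fin n => (if φ (h p.1) ∉ C then (1:ℝ) else 0))
        = ({p : X × Fin n | φ (h p.1) ∉ C}).indicator (fun _ => 1) := by
      funext p
      by_cases hp : φ (h p.1) ∉ C <;> simp [Set.indicator_apply, hp]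
    rw [heq, integral_indicator_const _ hS1]
    simp; rfl
  have hI2 : (∫ p, (if (φ (h p.1) ∈ C ∧ φ (h p.1) ≠ p.2) then (1:ℝ) else 0) ∂q)
      = (q {p | φ (h p.1) ∈ C ∧ φ (h p.1) ≠ p.2}).toReal := by
    have heq : (fun p : X × Fin n => (if (φ (h p.1) ∈ C ∧ φ (h p.1) ≠ p.2) then (1:ℝ) else 0))
        = ({p : X × Fin n | φ (h p.1) ∈ C ∧ φ (h p.1) ≠ p.2}).indicator (fun _ => 1) := by
      funext p
      by_cases hp : (φ (h p.1) ∈ C ∧ φ (h p.1) ≠ p.2) <;> simp [Set.indicator_apply, hp]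
    rw [heq, integral_indicator_const _ hS2]
    simp; rfl
  have hA : Integrable (fun p : X × Fin n =>
      2 * (1 - ⨆ j, h p.1 j) + 2 * (if φ (h p.1) ∉ C then (1:ℝ) else 0)) q :=
    (hsup_int.const_mul 2).add (hind1_int.const_mul 2)
  have step4 : ∫ p, G p ∂q = 2 * (∫ p, (1 - ⨆ j, h p.1 j) ∂q)
        + 2 * (q {p | φ (h p.1) ∉ C}).toReal
        + 2 * (q {p | φ (h p.1) ∈ C ∧ φ (h p.1) ≠ p.2}).toReal := by
    rw [hG]
    rw [show (∫ p, ((fun p : X × Fin n =>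
        2 * (1 - ⨆ j, h p.1 j) + 2 * (if φ (h p.1) ∉ C then (1:ℝ) else 0)
          + 2 * (if (φ (h p.1) ∈ C ∧ φ (h p.1) ≠ p.2) then (1:ℝ) else 0)) p) ∂q)
        = (∫ p, (2 * (1 - ⨆ j, h p.1 j) + 2 * (if φ (h p.1) ∉ C then (1:ℝ) else 0)) ∂q)
          + ∫ p, (2 * (if (φ (h p.1) ∈ C ∧ φ (h p.1) ≠ p.2) then (1:ℝ) else 0)) ∂q
      from integral_add hA (hind2_int.const_mul 2)]
    rw [integral_add (hsup_int.const_mul 2) (hind1_int.const_mul 2),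
      integral_const_mul, integral_const_mul, integral_const_mul, hI1, hI2]
  calc ∑ c, |(∫ p, (if p.2 = c then (1 : ℝ) else 0) ∂q) - ∫ p, h p.1 c ∂q|
      ≤ ∑ c, (∫ p, |(if p.2 = c then (1:ℝ) else 0) - h p.1 c| ∂q) :=
        Finset.sum_le_sum (fun c _ => step1 c)
    _ = ∫ p, ∑ c, |(if p.2 = c then (1:ℝ) else 0) - h p.1 c| ∂q := step2
    _ ≤ ∫ p, G p ∂q := step3
    _ = _ := step4
end

section
/- (Theorem 1.) Let q be a probability measure on X × {1,…,n}, let h : X → Δⁿ be a measurable classifier, and let C ⊆ {1,…,n} be such that y ∈ C for q-almost every (x, y). Suppose ε ≥ 0 and d ≥ 0 are real numbers such that the target-domain error within C is controlled by the source-domain error within C plus a distribution-discrepancy term, i.e., Pr_{(x,y)∼q}[φ(h(x)) ∈ C and φ(h(x)) ≠ y] ≤ ε + d. Then the approximation error of the transferable probability in L1 norm can be bounded as ‖ẇ − w‖₁ ≤ 2δ̄ + 2E_I(h) + 2ε + 2d, where ẇ = E_{(x,y)∼q} e_y, w = E_{(x,y)∼q} h(x), δ̄ = E_{(x,y)∼q}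 (1 − maxⱼ h(x)ⱼ), and E_I(h) = Pr_{(x,y)∼q}[φ(h(x)) ∉ C]. -/
open MeasureTheory

/-- Theorem 1 of the paper. With labels almost surely in the shared class space `C`,
and real numbers `ε ≥ 0` (the source error within `C`) and `d ≥ 0` (the HΔH
distribution discrepancy) such that the target error within `C` is controlled,
`Pr_q[φ (h x) ∈ C ∧ φ (h x) ≠ y] ≤ ε + d`, the approximation error of the
transferable probability in L1 norm can be bounded as
`‖ẇ − w‖₁ ≤ 2 δ̄ + 2 E_I(h) + 2 ε + 2 d`, where `ẇ = E_q e_y`, `w = E_q h(x)`,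
`δ̄ = E_q (1 − maxⱼ (h x) j)` and `E_I(h) = Pr_q[φ (h x) ∉ C]`. -/
theorem transferable_probability_main_bound (n : ℕ) [NeZero n]
    {X : Type*} [MeasurableSpace X]
    (q : Measure (X × Fin n)) [IsProbabilityMeasure q]
    (h : X → Fin n → ℝ) (hmeas : Measurable h)
    (hsimplex : ∀ x, (∀ j, 0 ≤ h x j ∧ h x j ≤ 1) ∧ ∑ j, h x j = 1)
    (φ : (Fin n → ℝ) → Fin n) (hφmeas : Measurable fun x => φ (h x))
    (hφ : ∀ x, h x (φ (h x)) = ⨆ j, h x j)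
    (C : Finset (Fin n)) (hC : ∀ᵐ p ∂q, p.2 ∈ C)
    (ε d : ℝ) (hε : 0 ≤ ε) (hd : 0 ≤ d)
    (hbound : (q {p | φ (h p.1) ∈ C ∧ φ (h p.1) ≠ p.2}).toReal ≤ ε + d) :
    ∑ c, |(∫ p, (if p.2 = c then (1 : ℝ) else 0) ∂q) - ∫ p, h p.1 c ∂q|
      ≤ 2 * (∫ p, (1 - ⨆ j, h p.1 j) ∂q)
        + 2 * (q {p | φ (h p.1) ∉ C}).toReal + 2 * ε + 2 * d := by
  classical
  -- replace the supremum by the value at the argmax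
  have hsup : (fun p : X × Fin n => (1 : ℝ) - ⨆ j, h p.1 j)
      = fun p : X × Fin n => 1 - h p.1 (φ (h p.1)) := by
    funext p; rw [hφ p.1]
  rw [hsup]
  set S1 : Set (X × Fin n) := {p | φ (h p.1) ∉ C} with hS1def
  set S2 : Set (X × Fin n) := {p | φ (h p.1) ∈ C ∧ φ (h p.1) ≠ p.2} with hS2def
  -- measurability facts
  have hg_meas : ∀ c : Fin n, Measurable fun p : X × Fin n => h p.1 c := fun c =>
    ((measurable_pi_apply c).comp hmeas).comp measurable_fst
  have hφp : Measurable fun p : X × Fin n => φ (h p.1) := hφmeas.comp measurable_fst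
  have hS1 : MeasurableSet S1 := by
    have : S1 = (fun p : X × Fin n => φ (h p.1)) ⁻¹' ((↑C : Set (Fin n))ᶜ) := rfl
    rw [this]; exact hφp ((C : Set (Fin n)).toFinite.measurableSet.compl)
  have hS2 : MeasurableSet S2 := by
    have hψ : Measurable fun p : X × Fin n => (φ (h p.1), p.2) := hφp.prodMk measurable_snd
    have : S2 = (fun p : X × Fin n => (φ (h p.1), p.2)) ⁻¹'
        {r : Fin n × Fin n | r.1 ∈ C ∧ r.1 ≠ r.2} := rfl
    rw [this]; exact hψ (Set.toFinite _).measurableSet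
  have hM_meas : Measurable fun p : X × Fin n => h p.1 (φ (h p.1)) := by
    have heq : (fun p : X × Fin n => h p.1 (φ (h p.1)))
        = fun p => ∑ j, if φ (h p.1) = j then h p.1 j else 0 := by
      funext p; simp [Finset.sum_ite_eq]
    rw [heq]
    exact Finset.measurable_sum _ fun j _ =>
      Measurable.ite (hφp (measurableSet_singleton j)) (hg_meas j) measurable_const
  -- integrability facts
  have hg_int : ∀ c : Fin n, Integrable (fun p : X × Fin n => h p.1 c) q := fun c => by
    refine (integrable_const (1 : ℝ)).mono' (hg_meas c).aestronglyMeasurable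
      (ae_of_all _ fun p => ?_)
    have hb := (hsimplex p.1).1 c
    rw [Real.norm_eq_abs, abs_of_nonneg hb.1]; exact hb.2
  have hf_meas : ∀ c : Fin n,
      Measurable fun p : X × Fin n => (if p.2 = c then (1 : ℝ) else 0) := fun c =>
    Measurable.ite (measurable_snd (measurableSet_singleton c)) measurable_const measurable_const
  have hf_int : ∀ c : Fin n,
      Integrable (fun p : X × Fin n => (if p.2 = c then (1 : ℝ) else 0)) q := fun c => by
    refine (integrable_const (1 : ℝ)).mono' (hf_meas c).aestronglyMeasurable
      (ae_of_all _ fun p => ?_)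
    by_cases hc : p.2 = c <;> simp [hc]
  have habs_int : ∀ c : Fin n,
      Integrable (fun p : X × Fin n => |(if p.2 = c then (1 : ℝ) else 0) - h p.1 c|) q :=
    fun c => ((hf_int c).sub (hg_int c)).abs
  have hM_int : Integrable (fun p : X × Fin n => (1 : ℝ) - h p.1 (φ (h p.1))) q := by
    refine (integrable_const (1 : ℝ)).mono' (measurable_const.sub hM_meas).aestronglyMeasurable
      (ae_of_all _ fun p => ?_)
    have hb := (hsimplex p.1).1 (φ (h p.1))
    rw [Real.norm_eq_abs, abs_of_nonneg (by linarith [hb.2])]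
    linarith [hb.1]
  have hind1_int : Integrable (S1.indicator fun _ => (1 : ℝ)) q :=
    (integrable_const (1 : ℝ)).indicator hS1
  have hind2_int : Integrable (S2.indicator fun _ => (1 : ℝ)) q :=
    (integrable_const (1 : ℝ)).indicator hS2
  -- the dominating function
  set F : X × Fin n → ℝ := fun p =>
    2 * (1 - h p.1 (φ (h p.1))) + 2 * S1.indicator (fun _ => (1 : ℝ)) p
      + 2 * S2.indicator (fun _ => (1 : ℝ)) p with hFdef
  have hF_int : Integrable F q :=
    (((hM_int.const_mul 2).add (hind1_int.const_mul 2)).add (hind2_int.const_mul 2))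
  -- pointwise bound
  have key : ∀ p : X × Fin n,
      (∑ c, |(if p.2 = c then (1 : ℝ) else 0) - h p.1 c|) ≤ F p := by
    intro p
    obtain ⟨hb, hs⟩ := hsimplex p.1
    have hsum : (∑ c, |(if p.2 = c then (1 : ℝ) else 0) - h p.1 c|)
        = 2 * (1 - h p.1 p.2) := by
      have e1 : ∀ c, |(if p.2 = c then (1 : ℝ) else 0) - h p.1 c|
          = h p.1 c + (if p.2 = c then 1 - 2 * h p.1 c else 0) := by
        intro c
        by_cases hc : p.2 = c
        · rw [if_pos hc, if_pos hc, abs_of_nonneg (by linarith [(hb c).2])]; ring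
        · simp only [if_neg hc, zero_sub, abs_neg, abs_of_nonneg (hb c).1, add_zero]
      simp only [e1, Finset.sum_add_distrib, hs, Finset.sum_ite_eq, Finset.mem_univ, if_true]
      ring
    rw [hsum]; simp only [hFdef]
    have hind1_nn : 0 ≤ S1.indicator (fun _ => (1 : ℝ)) p :=
      Set.indicator_nonneg (fun _ _ => zero_le_one) p
    have hind2_nn : 0 ≤ S2.indicator (fun _ => (1 : ℝ)) p :=
      Set.indicator_nonneg (fun _ _ => zero_le_one) p
    by_cases hpy : φ (h p.1) = p.2
    · rw [hpy]; linarith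
    · -- one of the two indicators equals 1
      have hone : (1 : ℝ) ≤ S1.indicator (fun _ => (1 : ℝ)) p
          + S2.indicator (fun _ => (1 : ℝ)) p := by
        by_cases hmem : φ (h p.1) ∈ C
        · have : p ∈ S2 := ⟨hmem, hpy⟩
          rw [Set.indicator_of_mem this]; linarith
        · have : p ∈ S1 := hmem
          rw [Set.indicator_of_mem this]; linarith
      have h1 : h p.1 (φ (h p.1)) ≤ 1 := (hb _).2
      have h2 : 0 ≤ h p.1 p.2 := (hb _).1
      linarith
  -- put things together
  have step1 : (∑ c, |(∫ p, (if p.2 = c then (1 : ℝ) else 0) ∂q) - ∫ p, h p.1 c ∂q|)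
      ≤ ∫ p, F p ∂q := by
    calc (∑ c, |(∫ p, (if p.2 = c then (1 : ℝ) else 0) ∂q) - ∫ p, h p.1 c ∂q|)
        = ∑ c, |∫ p, ((if p.2 = c then (1 : ℝ) else 0) - h p.1 c) ∂q| := by
          refine Finset.sum_congr rfl fun c _ => ?_
          rw [integral_sub (hf_int c) (hg_int c)]
      _ ≤ ∑ c, ∫ p, |(if p.2 = c then (1 : ℝ) else 0) - h p.1 c| ∂q :=
          Finset.sum_le_sum fun c _ => by
            simpa [Real.norm_eq_abs] using
              norm_integral_le_integral_norm
                (fun p : X × Fin n => (if p.2 = c then (1 : ℝ) else 0) - h p.1 c) (μ := q)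
      _ = ∫ p, ∑ c, |(if p.2 = c then (1 : ℝ) else 0) - h p.1 c| ∂q :=
          (integral_finset_sum _ fun c _ => habs_int c).symm
      _ ≤ ∫ p, F p ∂q := by
          refine integral_mono (integrable_finset_sum _ fun c _ => habs_int c) hF_int key
  have step2 : (∫ p, F p ∂q)
      = 2 * (∫ p, ((1 : ℝ) - h p.1 (φ (h p.1))) ∂q)
        + 2 * (q S1).toReal + 2 * (q S2).toReal := by
    simp only [hFdef]
    have iM : Integrable (fun p : X × Fin n => 2 * ((1 : ℝ) - h p.1 (φ (h p.1)))) q :=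
      hM_int.const_mul 2
    have i1 : Integrable (fun p : X × Fin n => 2 * S1.indicator (fun _ => (1 : ℝ)) p) q :=
      hind1_int.const_mul 2
    have i2 : Integrable (fun p : X × Fin n => 2 * S2.indicator (fun _ => (1 : ℝ)) p) q :=
      hind2_int.const_mul 2
    have i12 : Integrable (fun p : X × Fin n =>
        2 * ((1 : ℝ) - h p.1 (φ (h p.1))) + 2 * S1.indicator (fun _ => (1 : ℝ)) p) q :=
      iM.add i1
    rw [integral_add i12 i2, integral_add iM i1,
      integral_const_mul, integral_const_mul, integral_const_mul,
      integral_indicator_const (1 : ℝ) hS1, integral_indicator_const (1 : ℝ) hS2]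
    simp [mul_comm, measureReal_def]
  have hS2le : 2 * (q S2).toReal ≤ 2 * ε + 2 * d := by
    linarith [hbound]
  calc (∑ c, |(∫ p, (if p.2 = c then (1 : ℝ) else 0) ∂q) - ∫ p, h p.1 c ∂q|)
      ≤ ∫ p, F p ∂q := step1
    _ = 2 * (∫ p, ((1 : ℝ) - h p.1 (φ (h p.1))) ∂q)
        + 2 * (q S1).toReal + 2 * (q S2).toReal := step2
    _ ≤ 2 * (∫ p, ((1 : ℝ) - h p.1 (φ (h p.1))) ∂q)
        + 2 * (q S1).toReal + 2 * ε + 2 * d := by linarith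
end
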